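/- Let C be an additive category, (T, F) a pretorsion theory with trivial class Z, and Σ : C → C/Z the additive quotient functor by the ideal of Z-trivial morphisms. If TA →ε A →η FA is a short Z-exact sequence, then Σε is a kernel of Ση in C/Z (and dually Ση is a cokernel of Σε). -/

import Mathlib

open CategoryTheory CategoryTheory.Limits ZeroObject

universe v u

variable {C : Type u} [Category.{v} C]

/-- A morphism is `Z`-trivial if it factors through an object of `Z`. -/
def IsTrivialMor (Z : Set C) {X Y : C} (f : X ⟶ Y) : Prop :=
  ∃ (W : C) (p : X ⟶ W) (q : W ⟶ Y), W ∈ Z ∧ p ≫ q = f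

/-- `ε` is a `Z`-kernel of `f`. -/
def IsZKernel (Z : Set C) {K A B : C} (ε : K ⟶ A) (f : A ⟶ B) : Prop :=
  IsTrivialMor Z (ε ≫ f) ∧
    ∀ ⦃Y : C⦄ (l : Y ⟶ A), IsTrivialMor Z (l ≫ f) → ∃! l' : Y ⟶ K, l' ≫ ε = l

/-- `π` is a `Z`-cokernel of `f`. -/
def IsZCokernel (Z : Set C) {A B Q : C} (f : A ⟶ B) (π : B ⟶ Q) : Prop :=
  IsTrivialMor Z (f ≫ π) ∧
    ∀ ⦃Y : C⦄ (l : B ⟶ Y), IsTrivialMor Z (f ≫ l) → ∃! l' : Q ⟶ Y, π ≫ l' = l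

/-- `0 → A → X → B → 0` is a short exact sequence: `f` is a kernel of `g`
and `g` is a cokernel of `f`. -/
structure IsShortExactSeq [HasZeroMorphisms C] {A X B : C} (f : A ⟶ X) (g : X ⟶ B) : Prop where
  zero : f ≫ g = 0
  ker : ∀ ⦃Y : C⦄ (l : Y ⟶ X), l ≫ g = 0 → ∃! l' : Y ⟶ A, l' ≫ f = l
  coker : ∀ ⦃Y : C⦄ (l : X ⟶ Y), f ≫ l = 0 → ∃! l' : B ⟶ Y, g ≫ l' = l

/-- A torsion theory in a pointed category. -/
structure TorsionTheory (C : Type u) [Category.{v} C] [HasZeroMorphisms C] :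
    Type (max u v) where
  T : Set C
  F : Set C
  repleteT : ∀ ⦃X Y : C⦄, (X ≅ Y) → X ∈ T → Y ∈ T
  repleteF : ∀ ⦃X Y : C⦄, (X ≅ Y) → X ∈ F → Y ∈ F
  hom_zero : ∀ ⦃X Y : C⦄, X ∈ T → Y ∈ F → ∀ f : X ⟶ Y, f = 0
  exists_seq : ∀ X : C, ∃ (A B : C) (f : A ⟶ X) (g : X ⟶ B),
      A ∈ T ∧ B ∈ F ∧ IsShortExactSeq f g

/-- A pretorsion theory, with class of trivial objects `T ∩ F`. -/
structure PretorsionTheory (C : Type u) [Category.{v} C] : Type (max u v) where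
  T : Set C
  F : Set C
  repleteT : ∀ ⦃X Y : C⦄, (X ≅ Y) → X ∈ T → Y ∈ T
  repleteF : ∀ ⦃X Y : C⦄, (X ≅ Y) → X ∈ F → Y ∈ F
  hom_triv : ∀ ⦃X Y : C⦄, X ∈ T → Y ∈ F → ∀ f : X ⟶ Y, IsTrivialMor (T ∩ F) f
  exists_seq : ∀ X : C, ∃ (A B : C) (f : A ⟶ X) (g : X ⟶ B),
      A ∈ T ∧ B ∈ F ∧ IsZKernel (T ∩ F) f g ∧ IsZCokernel (T ∩ F) f g

/-- `A ∗ B`: objects that are extensions of an object of `A` by an object of `B`. -/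
def extClass [HasZeroMorphisms C] (A B : Set C) : Set C :=
  {X | ∃ (A₀ B₀ : C) (f : A₀ ⟶ X) (g : X ⟶ B₀), A₀ ∈ A ∧ B₀ ∈ B ∧ IsShortExactSeq f g}

/-- A Serre subcategory: closed under subobjects, quotients and extensions. -/
def SerreSub [HasZeroMorphisms C] (S : Set C) : Prop :=
  (∀ ⦃A B : C⦄ (m : A ⟶ B), Mono m → B ∈ S → A ∈ S) ∧
  (∀ ⦃A B : C⦄ (e : A ⟶ B), Epi e → A ∈ S → B ∈ S) ∧
  (∀ ⦃A X B : C⦄ (f : A ⟶ X) (g : X ⟶ B), IsShortExactSeq f g → A ∈ S → B ∈ S → X ∈ S)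

/-- The hom relation identifying morphisms whose difference is `Z`-trivial. -/
def trivRel [Preadditive C] (Z : Set C) : HomRel C :=
  fun {_ _} f g => IsTrivialMor Z (f - g)


section Aux

variable [Preadditive C]

lemma triv_comp_left {Z : Set C} {X Y W : C} (f : X ⟶ Y) {g : Y ⟶ W}
    (hg : IsTrivialMor Z g) : IsTrivialMor Z (f ≫ g) := by
  obtain ⟨V, p, q, hV, hpq⟩ := hg
  exact ⟨V, f ≫ p, q, hV, by rw [Category.assoc, hpq]⟩

lemma triv_comp_right {Z : Set C} {X Y W : C} {f : X ⟶ Y} (g : Y ⟶ W)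
    (hf : IsTrivialMor Z f) : IsTrivialMor Z (f ≫ g) := by
  obtain ⟨V, p, q, hV, hpq⟩ := hf
  exact ⟨V, p, q ≫ g, hV, by rw [← Category.assoc, hpq]⟩

lemma triv_of_source {Z : Set C} {X Y : C} (hX : X ∈ Z) (f : X ⟶ Y) :
    IsTrivialMor Z f := ⟨X, 𝟙 X, f, hX, Category.id_comp f⟩

lemma triv_of_target {Z : Set C} {X Y : C} (hY : Y ∈ Z) (f : X ⟶ Y) :
    IsTrivialMor Z f := ⟨Y, f, 𝟙 Y, hY, Category.comp_id f⟩

lemma triv_neg {Z : Set C} {X Y : C} {f : X ⟶ Y} (hf : IsTrivialMor Z f) :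
    IsTrivialMor Z (-f) := by
  obtain ⟨V, p, q, hV, hpq⟩ := hf
  exact ⟨V, -p, q, hV, by rw [Preadditive.neg_comp, hpq]⟩

lemma triv_zero {Z : Set C} {X Y : C} (hne : ∃ W : C, W ∈ Z) :
    IsTrivialMor Z (0 : X ⟶ Y) := by
  obtain ⟨V, hV⟩ := hne
  exact ⟨V, 0, 0, hV, by simp⟩

/-- `Z`-kernels are monomorphisms. -/
lemma zker_mono {Z : Set C} {K A B : C} {ε : K ⟶ A} {η : A ⟶ B}
    (h : IsZKernel Z ε η) : Mono ε := by
  constructor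
  intro Y a b hab
  have hl : IsTrivialMor Z ((a ≫ ε) ≫ η) := by
    rw [Category.assoc]; exact triv_comp_left a h.1
  obtain ⟨l', _, hu⟩ := h.2 (a ≫ ε) hl
  rw [hu a rfl, hu b hab.symm]

/-- `Z`-cokernels are epimorphisms. -/
lemma zcoker_epi {Z : Set C} {A B Q : C} {ε : A ⟶ B} {η : B ⟶ Q}
    (h : IsZCokernel Z ε η) : Epi η := by
  constructor
  intro Y a b hab
  have hl : IsTrivialMor Z (ε ≫ η ≫ a) := by
    rw [← Category.assoc]; exact triv_comp_right a h.1
  obtain ⟨l', _, hu⟩ := h.2 (η ≫ a) hl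
  rw [hu a rfl, hu b hab.symm]

/-- Cancellation: if `t ≫ ε` is trivial for a `Z`-kernel `ε`, then `t` is trivial. -/
lemma zker_cancel {Z : Set C} {K A B : C} {ε : K ⟶ A} {η : A ⟶ B}
    (h : IsZKernel Z ε η) {Y : C} {t : Y ⟶ K} (ht : IsTrivialMor Z (t ≫ ε)) :
    IsTrivialMor Z t := by
  obtain ⟨V, p, q, hV, hpq⟩ := ht
  obtain ⟨q', hq', _⟩ := h.2 q (triv_of_source hV (q ≫ η))
  haveI := zker_mono h
  have heq : (p ≫ q') ≫ ε = t ≫ ε := by rw [Category.assoc, hq', hpq]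
  exact ⟨V, p, q', hV, (cancel_mono ε).mp heq⟩

/-- Cancellation: if `η ≫ t` is trivial for a `Z`-cokernel `η`, then `t` is trivial. -/
lemma zcoker_cancel {Z : Set C} {A B Q : C} {ε : A ⟶ B} {η : B ⟶ Q}
    (h : IsZCokernel Z ε η) {Y : C} {t : Q ⟶ Y} (ht : IsTrivialMor Z (η ≫ t)) :
    IsTrivialMor Z t := by
  obtain ⟨V, p, q, hV, hpq⟩ := ht
  obtain ⟨p', hp', _⟩ := h.2 p (triv_of_target hV (ε ≫ p))
  haveI := zcoker_epi h
  have heq : η ≫ (p' ≫ q) = η ≫ t := by rw [← Category.assoc, hp', hpq]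
  exact ⟨V, p', q, hV, (cancel_epi η).mp heq⟩

variable [HasZeroObject C] [HasFiniteBiproducts C]

attribute [local instance] hasBinaryBiproducts_of_finite_biproducts

/-- The class of trivial objects is closed under biproducts. -/
lemma mem_biprod (P : PretorsionTheory C) {W₁ W₂ : C}
    (h1 : W₁ ∈ P.T ∩ P.F) (h2 : W₂ ∈ P.T ∩ P.F) : (W₁ ⊞ W₂ : C) ∈ P.T ∩ P.F := by
  haveI : HasBinaryBiproducts C := hasBinaryBiproducts_of_finite_biproducts C
  obtain ⟨A, B, f, g, hA, hB, hker, hcoker⟩ := P.exists_seq (W₁ ⊞ W₂)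
  haveI := zker_mono hker
  haveI := zcoker_epi hcoker
  -- T part
  obtain ⟨u₁, hu₁, _⟩ := hker.2 biprod.inl (triv_of_source h1 _)
  obtain ⟨u₂, hu₂, _⟩ := hker.2 biprod.inr (triv_of_source h2 _)
  have hsplit : (biprod.fst ≫ u₁ + biprod.snd ≫ u₂) ≫ f = 𝟙 (W₁ ⊞ W₂) := by
    rw [Preadditive.add_comp, Category.assoc, Category.assoc, hu₁, hu₂, biprod.total]
  have hfr : f ≫ (biprod.fst ≫ u₁ + biprod.snd ≫ u₂) = 𝟙 A := by
    have := congrArg (fun x => f ≫ x) hsplit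
    simp only [Category.comp_id] at this
    exact (cancel_mono f).mp (by rw [Category.assoc, hsplit, Category.comp_id, Category.id_comp])
  have eT : A ≅ W₁ ⊞ W₂ := ⟨f, biprod.fst ≫ u₁ + biprod.snd ≫ u₂, hfr, hsplit⟩
  -- F part
  obtain ⟨v₁, hv₁, _⟩ := hcoker.2 biprod.fst (triv_of_target h1 _)
  obtain ⟨v₂, hv₂, _⟩ := hcoker.2 biprod.snd (triv_of_target h2 _)
  have hsplit' : g ≫ (v₁ ≫ biprod.inl + v₂ ≫ biprod.inr) = 𝟙 (W₁ ⊞ W₂) := by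
    rw [Preadditive.comp_add, ← Category.assoc, ← Category.assoc, hv₁, hv₂, biprod.total]
  have hgr : (v₁ ≫ biprod.inl + v₂ ≫ biprod.inr) ≫ g = 𝟙 B := by
    exact (cancel_epi g).mp (by rw [← Category.assoc, hsplit', Category.comp_id, Category.id_comp])
  have eF : B ≅ W₁ ⊞ W₂ := ⟨(v₁ ≫ biprod.inl + v₂ ≫ biprod.inr), g, hgr, hsplit'⟩
  exact ⟨P.repleteT eT hA, P.repleteF eF hB⟩

lemma triv_add (P : PretorsionTheory C) {X Y : C} {f g : X ⟶ Y}
    (hf : IsTrivialMor (P.T ∩ P.F) f) (hg : IsTrivialMor (P.T ∩ P.F) g) :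
    IsTrivialMor (P.T ∩ P.F) (f + g) := by
  haveI : HasBinaryBiproducts C := hasBinaryBiproducts_of_finite_biproducts C
  obtain ⟨V, p, q, hV, hpq⟩ := hf
  obtain ⟨V', p', q', hV', hpq'⟩ := hg
  exact ⟨V ⊞ V', biprod.lift p p', biprod.desc q q', mem_biprod P hV hV',
    by rw [biprod.lift_desc, hpq, hpq']⟩

lemma Z_nonempty (P : PretorsionTheory C) : ∃ W : C, W ∈ P.T ∩ P.F := by
  obtain ⟨A, B, f, g, hA, hB, hker, _⟩ := P.exists_seq (0 : C)
  obtain ⟨V, _, _, hV, _⟩ := P.hom_triv hA hB (f ≫ g)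
  exact ⟨V, hV⟩

lemma trivRel_congruence (P : PretorsionTheory C) :
    Congruence (trivRel (P.T ∩ P.F)) where
  equivalence := by
    refine fun {X Y} => ⟨?_, ?_, ?_⟩
    · intro f; show IsTrivialMor _ (f - f); rw [sub_self]; exact triv_zero (Z_nonempty P)
    · intro f g h; show IsTrivialMor _ (g - f)
      have := triv_neg h; rwa [neg_sub] at this
    · intro f g h h1 h2; show IsTrivialMor _ (f - h)
      have := triv_add P h1 h2
      rwa [sub_add_sub_cancel] at this
  comp_left := by
    intro X Y Z f g g' h
    show IsTrivialMor _ (f ≫ g - f ≫ g')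
    rw [← Preadditive.comp_sub]
    exact triv_comp_left f h
  comp_right := by
    intro X Y Z f f' g h
    show IsTrivialMor _ (f ≫ g - f' ≫ g)
    rw [← Preadditive.sub_comp]
    exact triv_comp_right g h

end Aux

theorem stmt11 [Preadditive C] [HasZeroObject C] [HasFiniteBiproducts C]
    (P : PretorsionTheory C) {TA A FA : C} (ε : TA ⟶ A) (η : A ⟶ FA)
    (hk : IsZKernel (P.T ∩ P.F) ε η) (hc : IsZCokernel (P.T ∩ P.F) ε η) :
    letI σ := Quotient.functor (trivRel (P.T ∩ P.F))
    (σ.map ε ≫ σ.map η = σ.map (0 : TA ⟶ FA)) ∧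
    (∀ (W : C) (h : σ.obj W ⟶ σ.obj A), h ≫ σ.map η = σ.map (0 : W ⟶ FA) →
      ∃! k : σ.obj W ⟶ σ.obj TA, k ≫ σ.map ε = h) ∧
    (∀ (W : C) (h : σ.obj A ⟶ σ.obj W), σ.map ε ≫ h = σ.map (0 : TA ⟶ W) →
      ∃! k : σ.obj FA ⟶ σ.obj W, σ.map η ≫ k = h) := by
  haveI : Congruence (trivRel (P.T ∩ P.F)) := trivRel_congruence P
  set Z := P.T ∩ P.F with hZ
  set σ := Quotient.functor (trivRel Z) with hσ
  have key : ∀ {X Y : C} (f g : X ⟶ Y), σ.map f = σ.map g ↔ IsTrivialMor Z (f - g) :=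
    fun {_ _} f g => Quotient.functor_map_eq_iff (trivRel Z) f g
  refine ⟨?_, ?_, ?_⟩
  · rw [← σ.map_comp, key]
    rw [sub_zero]
    exact hk.1
  · intro W h hh
    obtain ⟨l, hl⟩ := σ.map_surjective h
    have hlη : IsTrivialMor Z (l ≫ η) := by
      have : σ.map (l ≫ η) = σ.map (0 : W ⟶ FA) := by
        rw [σ.map_comp, hl]; exact hh
      rw [key, sub_zero] at this; exact this
    obtain ⟨l', hl', _⟩ := hk.2 l hlη
    refine ⟨σ.map l', by show σ.map l' ≫ σ.map ε = h; rw [← σ.map_comp, hl', hl], ?_⟩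
    intro k' hk'
    obtain ⟨m, hm⟩ := σ.map_surjective k'
    rw [← hm]
    rw [key]
    apply zker_cancel hk
    rw [Preadditive.sub_comp, hl']
    rw [← key, σ.map_comp, hm, hk', ← hl]
  · intro W h hh
    obtain ⟨l, hl⟩ := σ.map_surjective h
    have hεl : IsTrivialMor Z (ε ≫ l) := by
      have : σ.map (ε ≫ l) = σ.map (0 : TA ⟶ W) := by
        rw [σ.map_comp, hl]; exact hh
      rw [key, sub_zero] at this; exact this
    obtain ⟨l', hl', _⟩ := hc.2 l hεl
    refine ⟨σ.map l', by show σ.map η ≫ σ.map l' = h; rw [← σ.map_comp, hl', hl], ?_⟩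
    intro k' hk'
    obtain ⟨m, hm⟩ := σ.map_surjective k'
    rw [← hm, key]
    apply zcoker_cancel hc
    rw [Preadditive.comp_sub, hl']
    rw [← key, σ.map_comp, hm, hk', ← hl]
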